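/- arXiv:2203.12343 — 2 statements merged into one kernel-verified Lean document; each statement's English description precedes it below -/
import Mathlib

section
/- Let d ≥ 1, let ν be an admissible measure on ℝ^d, and let u : ℝ^d → ℝ be continuously differentiable with u ∈ L^1(ℝ^d) and ∇u ∈ L^1(ℝ^d; ℝ^d). Then (i) F_ν(u) ≤ C_ν (‖u‖_{L^1} + ‖∇u‖_{L^1}), where C_ν = ∫_{ℝ^d} min(1,|x|) ν(dx); and (ii) F_ν(u) ≤ (∫_{ℝ^d} |x| ν(dx)) · ‖∇u‖_{L^1}, where the right-hand side may be infinite. Here ‖∇u‖_{L^1} = ∫_{ℝ^d} |∇u(x)| dx. -/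
open MeasureTheory Filter Topology ENNReal

/-- `F_ν(u) = (1/2) ∫_{ℝ^d} ∫_{ℝ^d} |u(x+y) − u(y)| ν(dx) dy`. -/
noncomputable def Fnu {d : ℕ} (ν : Measure (EuclideanSpace ℝ (Fin d)))
    (u : EuclideanSpace ℝ (Fin d) → ℝ) : ℝ≥0∞ :=
  (1 / 2 : ℝ≥0∞) * ∫⁻ y, ∫⁻ x, ENNReal.ofReal |u (x + y) - u y| ∂ν

/-- An admissible measure is σ-finite. -/
lemma admissible_sigmaFinite {d : ℕ} (ν : Measure (EuclideanSpace ℝ (Fin d)))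
    (hν0 : ν {0} = 0)
    (hν1 : (∫⁻ x, ENNReal.ofReal (min 1 ‖x‖) ∂ν) < ⊤) : SigmaFinite ν := by
  set f : EuclideanSpace ℝ (Fin d) → ℝ≥0∞ := fun x => ENNReal.ofReal (min 1 ‖x‖) with hf
  have hfm : AEMeasurable f ν :=
    (ENNReal.continuous_ofReal.comp ((continuous_const.min continuous_norm))).aemeasurable
  constructor
  refine ⟨{ set := fun n => {x | (1:ℝ)/(n+1) ≤ ‖x‖} ∪ {0},
            set_mem := fun _ => Set.mem_univ _,
            finite := ?_, spanning := ?_ }⟩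
  · intro n
    have hn1 : (1:ℝ)/(n+1) ≤ 1 := by
      rw [div_le_one (by positivity)]
      have : (0:ℝ) ≤ n := n.cast_nonneg
      linarith
    have hsub : {x : EuclideanSpace ℝ (Fin d) | (1:ℝ)/(n+1) ≤ ‖x‖} ⊆
        {x | ENNReal.ofReal ((1:ℝ)/(n+1)) ≤ f x} := fun x hx =>
      ENNReal.ofReal_le_ofReal (le_min hn1 hx)
    have h2 : ν {x | ENNReal.ofReal ((1:ℝ)/(n+1)) ≤ f x} ≤
        (∫⁻ x, f x ∂ν) / ENNReal.ofReal ((1:ℝ)/(n+1)) :=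
      meas_ge_le_lintegral_div hfm (by simp; positivity) (by simp)
    have h3 : ν ({x : EuclideanSpace ℝ (Fin d) | (1:ℝ)/(n+1) ≤ ‖x‖} ∪ {0}) ≤
        (∫⁻ x, f x ∂ν) / ENNReal.ofReal ((1:ℝ)/(n+1)) := by
      refine le_trans (measure_union_le _ _) ?_
      rw [hν0, add_zero]
      exact le_trans (measure_mono hsub) h2
    refine lt_of_le_of_lt h3 (ENNReal.div_lt_top hν1.ne (by simp; positivity))
  · rw [Set.eq_univ_iff_forall]
    intro x
    rcases eq_or_ne x 0 with h | h
    · exact Set.mem_iUnion.2 ⟨0, Or.inr h⟩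
    · have hx : 0 < ‖x‖ := norm_pos_iff.2 h
      obtain ⟨n, hn⟩ := exists_nat_gt (1/‖x‖)
      refine Set.mem_iUnion.2 ⟨n, Or.inl ?_⟩
      have hn' : 1/‖x‖ < n + 1 := by linarith [hn]
      rw [Set.mem_setOf_eq, div_le_iff₀ (by positivity)]
      rw [div_lt_iff₀ hx] at hn'
      linarith

/-- `L¹` bound on translation differences. -/
lemma translate_diff_le_L1 {d : ℕ} (u : EuclideanSpace ℝ (Fin d) → ℝ)
    (hu : ContDiff ℝ 1 u) (x : EuclideanSpace ℝ (Fin d)) :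
    (∫⁻ y, ENNReal.ofReal |u (x + y) - u y|) ≤
      2 * ∫⁻ z, ENNReal.ofReal |u z| := by
  have hm : Measurable fun y : EuclideanSpace ℝ (Fin d) => ENNReal.ofReal |u (x + y)| :=
    (ENNReal.continuous_ofReal.comp
      ((hu.continuous.comp (continuous_const.add continuous_id)).abs)).measurable
  calc (∫⁻ y, ENNReal.ofReal |u (x + y) - u y|)
      ≤ ∫⁻ y, (ENNReal.ofReal |u (x + y)| + ENNReal.ofReal |u y|) := by
        refine lintegral_mono fun y => ?_
        exact le_trans (ENNReal.ofReal_le_ofReal (abs_sub _ _)) ENNReal.ofReal_add_le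
    _ = (∫⁻ y, ENNReal.ofReal |u (x + y)|) + ∫⁻ y, ENNReal.ofReal |u y| :=
        lintegral_add_left hm _
    _ = 2 * ∫⁻ z, ENNReal.ofReal |u z| := by
        rw [lintegral_add_left_eq_self (fun z => ENNReal.ofReal |u z|) x, two_mul]

/-- Gradient bound on translation differences. -/
lemma translate_diff_le_grad {d : ℕ} (u : EuclideanSpace ℝ (Fin d) → ℝ)
    (hu : ContDiff ℝ 1 u) (x : EuclideanSpace ℝ (Fin d)) :
    (∫⁻ y, ENNReal.ofReal |u (x + y) - u y|) ≤
      ENNReal.ofReal ‖x‖ * ∫⁻ z, ENNReal.ofReal ‖fderiv ℝ u z‖ := by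
  have hL : ∀ (y : EuclideanSpace ℝ (Fin d)) (t : ℝ),
      HasDerivAt (fun s : ℝ => y + s • x) x t := fun y t => by
    simpa using ((hasDerivAt_id t).smul_const x).const_add y
  have hfc : Continuous (fderiv ℝ u) := hu.continuous_fderiv one_ne_zero
  have key : ∀ y : EuclideanSpace ℝ (Fin d),
      ENNReal.ofReal |u (x + y) - u y| ≤
        ∫⁻ t in Set.Ioc (0:ℝ) 1, ENNReal.ofReal (‖fderiv ℝ u (y + t • x)‖ * ‖x‖) := by
    intro y
    have hφ : ∀ t ∈ Set.uIcc (0:ℝ) 1,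
        HasDerivAt (fun s : ℝ => u (y + s • x)) ((fderiv ℝ u (y + t • x)) x) t := fun t _ =>
      ((hu.differentiable one_ne_zero (y + t • x)).hasFDerivAt).comp_hasDerivAt t (hL y t)
    have hcont : Continuous fun t : ℝ => (fderiv ℝ u (y + t • x)) x :=
      (hfc.comp (continuous_const.add (continuous_id.smul continuous_const))).clm_apply
        continuous_const
    have hcont2 : Continuous fun t : ℝ => ‖fderiv ℝ u (y + t • x)‖ * ‖x‖ :=
      ((hfc.comp (continuous_const.add (continuous_id.smul continuous_const))).norm).mul
        continuous_const
    have heq : u (x + y) - u y = ∫ t in (0:ℝ)..1, (fderiv ℝ u (y + t • x)) x := by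
      rw [intervalIntegral.integral_eq_sub_of_hasDerivAt hφ (hcont.intervalIntegrable 0 1)]
      simp [add_comm]
    have habs : |u (x + y) - u y| ≤ ∫ t in (0:ℝ)..1, ‖fderiv ℝ u (y + t • x)‖ * ‖x‖ := by
      rw [heq, ← Real.norm_eq_abs]
      refine le_trans (intervalIntegral.norm_integral_le_integral_norm zero_le_one) ?_
      refine intervalIntegral.integral_mono_on zero_le_one
        (hcont.norm.intervalIntegrable 0 1) (hcont2.intervalIntegrable 0 1) ?_
      intro t _
      exact (fderiv ℝ u (y + t • x)).le_opNorm x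
    refine le_trans (ENNReal.ofReal_le_ofReal habs) ?_
    rw [intervalIntegral.integral_of_le zero_le_one,
      ofReal_integral_eq_lintegral_ofReal (hcont2.integrableOn_Ioc)
        (ae_of_all _ fun t => mul_nonneg (norm_nonneg _) (norm_nonneg _))]
  refine le_trans (lintegral_mono key) ?_
  have hmeas : AEMeasurable (Function.uncurry fun (y : EuclideanSpace ℝ (Fin d)) (t : ℝ) =>
      ENNReal.ofReal (‖fderiv ℝ u (y + t • x)‖ * ‖x‖))
      ((volume : Measure (EuclideanSpace ℝ (Fin d))).prod (volume.restrict (Set.Ioc 0 1))) := by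
    apply Continuous.aemeasurable
    apply ENNReal.continuous_ofReal.comp
    exact ((hfc.comp (continuous_fst.add (continuous_snd.smul continuous_const))).norm).mul
      continuous_const
  rw [lintegral_lintegral_swap hmeas]
  have inner : ∀ t : ℝ,
      (∫⁻ y, ENNReal.ofReal (‖fderiv ℝ u (y + t • x)‖ * ‖x‖)) =
        (∫⁻ z, ENNReal.ofReal ‖fderiv ℝ u z‖) * ENNReal.ofReal ‖x‖ := by
    intro t
    simp_rw [ENNReal.ofReal_mul (norm_nonneg _)]
    rw [lintegral_mul_const _ (by
      exact (ENNReal.continuous_ofReal.comp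
        (hfc.comp (continuous_id.add continuous_const)).norm).measurable)]
    congr 1
    exact lintegral_add_right_eq_self (fun z => ENNReal.ofReal ‖fderiv ℝ u z‖) (t • x)
  simp_rw [inner]
  rw [lintegral_const, Measure.restrict_apply MeasurableSet.univ, Set.univ_inter,
    Real.volume_Ioc]
  simp [mul_comm]

/-- For an admissible measure `ν` and a `C¹` function `u ∈ L¹(ℝ^d)` with
`∇u ∈ L¹(ℝ^d; ℝ^d)`:
(i) `F_ν(u) ≤ C_ν (‖u‖_{L¹} + ‖∇u‖_{L¹})` with `C_ν = ∫ min(1,|x|) ν(dx)`; and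
(ii) `F_ν(u) ≤ (∫ |x| ν(dx)) ‖∇u‖_{L¹}` (the right-hand side may be infinite). -/
theorem statement3 {d : ℕ} (hd : 1 ≤ d)
    (ν : Measure (EuclideanSpace ℝ (Fin d)))
    (hν0 : ν {0} = 0)
    (hν1 : (∫⁻ x, ENNReal.ofReal (min 1 ‖x‖) ∂ν) < ⊤)
    (u : EuclideanSpace ℝ (Fin d) → ℝ)
    (hu : ContDiff ℝ 1 u) (huL1 : Integrable u)
    (hgrad : Integrable fun x => ‖fderiv ℝ u x‖) :
    Fnu ν u ≤ (∫⁻ x, ENNReal.ofReal (min 1 ‖x‖) ∂ν) *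
        (ENNReal.ofReal (∫ x, |u x|) + ENNReal.ofReal (∫ x, ‖fderiv ℝ u x‖)) ∧
      Fnu ν u ≤ (∫⁻ x, ENNReal.ofReal ‖x‖ ∂ν) *
        ENNReal.ofReal (∫ x, ‖fderiv ℝ u x‖) := by
  have hsf : SigmaFinite ν := admissible_sigmaFinite ν hν0 hν1
  set A := ENNReal.ofReal (∫ x, |u x|) with hA
  set G := ENNReal.ofReal (∫ x, ‖fderiv ℝ u x‖) with hG
  have hAeq : A = ∫⁻ z, ENNReal.ofReal |u z| := by
    rw [hA, ofReal_integral_eq_lintegral_ofReal huL1.abs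
      (ae_of_all _ fun z => abs_nonneg _)]
  have hGeq : G = ∫⁻ z, ENNReal.ofReal ‖fderiv ℝ u z‖ := by
    rw [hG, ofReal_integral_eq_lintegral_ofReal hgrad
      (ae_of_all _ fun z => norm_nonneg _)]
  -- swap the two integrals in Fnu
  have hswap : Fnu ν u =
      (1 / 2 : ℝ≥0∞) * ∫⁻ x, (∫⁻ y, ENNReal.ofReal |u (x + y) - u y|) ∂ν := by
    rw [Fnu]
    congr 1
    exact lintegral_lintegral_swap (by
      apply Continuous.aemeasurable
      apply ENNReal.continuous_ofReal.comp
      exact ((hu.continuous.comp (continuous_snd.add continuous_fst)).sub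
        (hu.continuous.comp continuous_fst)).abs)
  set g : EuclideanSpace ℝ (Fin d) → ℝ≥0∞ :=
    fun x => ∫⁻ y, ENNReal.ofReal |u (x + y) - u y| with hg
  have hg1 : ∀ x, g x ≤ 2 * A := fun x => by
    rw [hAeq]; exact translate_diff_le_L1 u hu x
  have hg2 : ∀ x, g x ≤ ENNReal.ofReal ‖x‖ * G := fun x => by
    rw [hGeq]; exact translate_diff_le_grad u hu x
  constructor
  · -- part (i)
    have hpt : ∀ x : EuclideanSpace ℝ (Fin d),
        g x ≤ ENNReal.ofReal (min 1 ‖x‖) * (2 * (A + G)) := by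
      intro x
      rcases le_total ‖x‖ 1 with h | h
      · rw [min_eq_right h]
        calc g x ≤ ENNReal.ofReal ‖x‖ * G := hg2 x
          _ ≤ ENNReal.ofReal ‖x‖ * (2 * (A + G)) := by
              refine mul_le_mul_right ?_ _
              calc G ≤ A + G := le_add_self
                _ ≤ 2 * (A + G) := by
                    nth_rewrite 1 [← one_mul (A + G)]
                    exact mul_le_mul_left one_le_two _
      · rw [min_eq_left h]
        calc g x ≤ 2 * A := hg1 x
          _ ≤ 2 * (A + G) := mul_le_mul_right le_self_add _
          _ = ENNReal.ofReal 1 * (2 * (A + G)) := by simp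
    calc Fnu ν u = (1 / 2 : ℝ≥0∞) * ∫⁻ x, g x ∂ν := hswap
      _ ≤ (1 / 2 : ℝ≥0∞) * ∫⁻ x, ENNReal.ofReal (min 1 ‖x‖) * (2 * (A + G)) ∂ν :=
          mul_le_mul_right (lintegral_mono hpt) _
      _ = (1 / 2 : ℝ≥0∞) * ((∫⁻ x, ENNReal.ofReal (min 1 ‖x‖) ∂ν) * (2 * (A + G))) := by
          have hm : AEMeasurable (fun x : EuclideanSpace ℝ (Fin d) =>
              ENNReal.ofReal (min 1 ‖x‖)) ν :=
            Continuous.aemeasurable (ENNReal.continuous_ofReal.comp (by fun_prop))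
          rw [lintegral_mul_const'' _ hm]
      _ = (∫⁻ x, ENNReal.ofReal (min 1 ‖x‖) ∂ν) * (A + G) := by
          rw [← mul_assoc, mul_comm (1/2 : ℝ≥0∞), mul_assoc, ← mul_assoc (1/2 : ℝ≥0∞),
            one_div, ENNReal.inv_mul_cancel two_ne_zero ENNReal.ofNat_ne_top, one_mul]
  · -- part (ii)
    calc Fnu ν u = (1 / 2 : ℝ≥0∞) * ∫⁻ x, g x ∂ν := hswap
      _ ≤ (1 / 2 : ℝ≥0∞) * ∫⁻ x, ENNReal.ofReal ‖x‖ * G ∂ν :=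
          mul_le_mul_right (lintegral_mono hg2) _
      _ = (1 / 2 : ℝ≥0∞) * ((∫⁻ x, ENNReal.ofReal ‖x‖ ∂ν) * G) := by
          have hm : AEMeasurable (fun x : EuclideanSpace ℝ (Fin d) =>
              ENNReal.ofReal ‖x‖) ν :=
            Continuous.aemeasurable (ENNReal.continuous_ofReal.comp (by fun_prop))
          rw [lintegral_mul_const'' _ hm]
      _ ≤ (∫⁻ x, ENNReal.ofReal ‖x‖ ∂ν) * G := by
          nth_rewrite 2 [← one_mul ((∫⁻ x, ENNReal.ofReal ‖x‖ ∂ν) * G)]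
          exact mul_le_mul_left (by norm_num) _
end

section
/- Let d ≥ 1, let η be a Borel probability measure on the unit sphere S^{d−1}, and for α ∈ (0,1) let ν_α be the α-stable Lévy measure defined by ν_α(A) = ∫_{S^{d−1}} ∫_0^∞ 1_A(rθ) r^{−1−α} dr η(dθ) for Borel sets A ⊂ ℝ^d. Then for every continuously differentiable f : ℝ^d → ℝ with f ∈ L^1(ℝ^d) and ∇f ∈ L^1(ℝ^d;ℝ^d), lim_{α→1⁻} (1−α) F_{ν_α}(f) = (1/2) ∫_{S^{d−1}} ∫_{ℝ^d} |∇f(x) · θ| dx η(dθ). -/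
open MeasureTheory Filter Topology ENNReal Set

/-- The `α`-stable Lévy measure with spectral measure `η` on the unit sphere:
`ν_α(A) = ∫_{S^{d−1}} ∫_0^∞ 1_A(rθ) r^{−1−α} dr η(dθ)`. -/
noncomputable def stableMeasure {d : ℕ} (η : Measure (EuclideanSpace ℝ (Fin d)))
    (α : ℝ) : Measure (EuclideanSpace ℝ (Fin d)) :=
  η.bind fun θ => Measure.map (fun r : ℝ => r • θ)
    ((volume.restrict (Set.Ioi (0 : ℝ))).withDensity fun r =>
      ENNReal.ofReal (r ^ (-1 - α)))

noncomputable section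

variable {d : ℕ}

local notation "E" => EuclideanSpace ℝ (Fin d)

def Gfun (f : E → ℝ) (θ : E) (r : ℝ) : ℝ≥0∞ :=
  ∫⁻ y : E, ENNReal.ofReal |f (r • θ + y) - f y|

def Lfun (f : E → ℝ) (θ : E) : ℝ≥0∞ :=
  ∫⁻ x : E, ENNReal.ofReal |fderiv ℝ f x θ|

theorem Gfun_meas {f : E → ℝ} (hf : Continuous f) :
    Measurable (Function.uncurry (Gfun f)) := by
  apply Measurable.lintegral_prod_right'
    (f := fun p : (E × ℝ) × E => ENNReal.ofReal |f (p.1.2 • p.1.1 + p.2) - f p.2|)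
  have hc : Continuous fun p : (E × ℝ) × E => |f (p.1.2 • p.1.1 + p.2) - f p.2| := by
    fun_prop
  exact hc.measurable.ennreal_ofReal

theorem ftc_line {f : E → ℝ} (hf : ContDiff ℝ 1 f) (y v : E) :
    f (v + y) - f y = ∫ t in (0:ℝ)..1, fderiv ℝ f (y + t • v) v := by
  have hder : ∀ t ∈ Set.uIcc (0:ℝ) 1,
      HasDerivAt (fun s : ℝ => f (y + s • v)) (fderiv ℝ f (y + t • v) v) t := by
    intro t _
    have h1 : HasDerivAt (fun s : ℝ => y + s • v) v t := by
      simpa using ((hasDerivAt_id t).smul_const v).const_add y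
    have h2 : HasFDerivAt f (fderiv ℝ f (y + t • v)) (y + t • v) :=
      (hf.differentiable one_ne_zero (y + t • v)).hasFDerivAt
    exact h2.comp_hasDerivAt t h1
  have hcont : ContinuousOn (fun t : ℝ => fderiv ℝ f (y + t • v) v) (Set.uIcc 0 1) := by
    have : Continuous fun t : ℝ => fderiv ℝ f (y + t • v) v := by
      have h1 : Continuous fun t : ℝ => fderiv ℝ f (y + t • v) :=
        (hf.continuous_fderiv one_ne_zero).comp (by fun_prop)
      exact h1.clm_apply continuous_const
    exact this.continuousOn
  have := intervalIntegral.integral_eq_sub_of_hasDerivAt hder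
    (hcont.intervalIntegrable)
  rw [this]
  simp [add_comm]

theorem pointwise_bound {f : E → ℝ} (hf : ContDiff ℝ 1 f) (y v : E) :
    ENNReal.ofReal |f (v + y) - f y|
      ≤ ∫⁻ t in Set.Ioc (0:ℝ) 1, ENNReal.ofReal |fderiv ℝ f (y + t • v) v| := by
  have hcont : Continuous fun t : ℝ => fderiv ℝ f (y + t • v) v := by
    have h1 : Continuous fun t : ℝ => fderiv ℝ f (y + t • v) :=
      (hf.continuous_fderiv one_ne_zero).comp (by fun_prop)
    exact h1.clm_apply continuous_const
  rw [ftc_line hf y v]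
  calc ENNReal.ofReal |∫ t in (0:ℝ)..1, fderiv ℝ f (y + t • v) v|
      ≤ ENNReal.ofReal (∫ t in (0:ℝ)..1, |fderiv ℝ f (y + t • v) v|) :=
        ENNReal.ofReal_le_ofReal
          (intervalIntegral.abs_integral_le_integral_abs zero_le_one)
    _ = ENNReal.ofReal (∫ t in Set.Ioc (0:ℝ) 1, |fderiv ℝ f (y + t • v) v|) := by
        rw [intervalIntegral.integral_of_le zero_le_one]
    _ ≤ ∫⁻ t in Set.Ioc (0:ℝ) 1, ENNReal.ofReal |fderiv ℝ f (y + t • v) v| := by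
        rw [ofReal_integral_eq_lintegral_ofReal
          (hcont.abs.integrableOn_Ioc) (Filter.Eventually.of_forall fun t => abs_nonneg _)]

theorem lint_translate (g : E → ℝ≥0∞) (a : E) :
    ∫⁻ y : E, g (y + a) = ∫⁻ y : E, g y :=
  lintegral_add_right_eq_self g a

theorem lint_translate' {f : E → ℝ} (hf : Continuous f) (a : E) :
    (∫⁻ y : E, ENNReal.ofReal |f (a + y)|) = ∫⁻ y : E, ENNReal.ofReal |f y| := by
  simp_rw [add_comm a]
  exact lint_translate (fun y => ENNReal.ofReal |f y|) a

theorem Lfun_meas_integrand {f : E → ℝ} (hf : ContDiff ℝ 1 f) (v : E) :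
    Continuous fun x : E => |fderiv ℝ f x v| :=
  (((hf.continuous_fderiv one_ne_zero).clm_apply continuous_const)).abs

theorem Gfun_le {f : E → ℝ} (hf : ContDiff ℝ 1 f) (θ : E) (r : ℝ) :
    Gfun f θ r ≤ ENNReal.ofReal |r| * Lfun f θ := by
  have hgc : Measurable fun p : ℝ × E => ENNReal.ofReal |fderiv ℝ f (p.2 + p.1 • r • θ) (r • θ)| := by
    have : Continuous fun p : ℝ × E => fderiv ℝ f (p.2 + p.1 • r • θ) :=
      (hf.continuous_fderiv one_ne_zero).comp (by fun_prop)
    exact ((this.clm_apply continuous_const).abs).measurable.ennreal_ofReal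
  calc Gfun f θ r
      ≤ ∫⁻ y : E, ∫⁻ t in Set.Ioc (0:ℝ) 1,
          ENNReal.ofReal |fderiv ℝ f (y + t • r • θ) (r • θ)| :=
        lintegral_mono fun y => pointwise_bound hf y (r • θ)
    _ = ∫⁻ t in Set.Ioc (0:ℝ) 1, ∫⁻ y : E,
          ENNReal.ofReal |fderiv ℝ f (y + t • r • θ) (r • θ)| := by
        rw [lintegral_lintegral_swap]
        exact (hgc.comp measurable_swap).aemeasurable
    _ = ∫⁻ t in Set.Ioc (0:ℝ) 1, ENNReal.ofReal |r| * Lfun f θ := by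
        refine setLIntegral_congr_fun measurableSet_Ioc
          (fun t _ => ?_)
        have h1 : ∀ y : E, |fderiv ℝ f y (r • θ)| = |r| * |fderiv ℝ f y θ| := by
          intro y; rw [(fderiv ℝ f y).map_smul]; simp [abs_mul]
        calc (∫⁻ y : E, ENNReal.ofReal |fderiv ℝ f (y + t • r • θ) (r • θ)|)
            = ∫⁻ y : E, ENNReal.ofReal |fderiv ℝ f y (r • θ)| :=
              lint_translate (fun y => ENNReal.ofReal |fderiv ℝ f y (r • θ)|) _
          _ = ∫⁻ y : E, ENNReal.ofReal |r| * ENNReal.ofReal |fderiv ℝ f y θ| := by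
              simp_rw [h1, ENNReal.ofReal_mul (abs_nonneg r)]
          _ = ENNReal.ofReal |r| * Lfun f θ := lintegral_const_mul' _ _ ENNReal.ofReal_ne_top
    _ = ENNReal.ofReal |r| * Lfun f θ := by
        rw [setLIntegral_const]
        simp [Real.volume_Ioc]

theorem Gfun_le_const {f : E → ℝ} (hf : Continuous f) (θ : E) (r : ℝ) :
    Gfun f θ r ≤ 2 * ∫⁻ x : E, ENNReal.ofReal |f x| := by
  calc Gfun f θ r
      ≤ ∫⁻ y : E, (ENNReal.ofReal |f (r • θ + y)| + ENNReal.ofReal |f y|) := by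
        refine lintegral_mono fun y => ?_
        rw [← ENNReal.ofReal_add (abs_nonneg _) (abs_nonneg _)]
        exact ENNReal.ofReal_le_ofReal (abs_sub _ _)
    _ = (∫⁻ y : E, ENNReal.ofReal |f (r • θ + y)|) + ∫⁻ y : E, ENNReal.ofReal |f y| :=
        lintegral_add_left ((hf.comp (continuous_const.add continuous_id)).abs.measurable.ennreal_ofReal) _
    _ = 2 * ∫⁻ x : E, ENNReal.ofReal |f x| := by
        rw [lint_translate' hf (r • θ)]; ring

theorem lint_abs_ne_top {g : E → ℝ} (hg : Integrable g) :
    (∫⁻ x : E, ENNReal.ofReal |g x|) ≠ ∞ := by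
  have := hg.2
  rw [hasFiniteIntegral_iff_norm] at this
  simpa [Real.norm_eq_abs] using this.ne

theorem Lfun_le {f : E → ℝ} (θ : E) :
    Lfun f θ ≤ ENNReal.ofReal ‖θ‖ * ∫⁻ x : E, ENNReal.ofReal ‖fderiv ℝ f x‖ := by
  calc Lfun f θ
      ≤ ∫⁻ x : E, ENNReal.ofReal (‖fderiv ℝ f x‖ * ‖θ‖) := by
        refine lintegral_mono fun x => ENNReal.ofReal_le_ofReal ?_
        calc |fderiv ℝ f x θ| = ‖fderiv ℝ f x θ‖ := rfl
          _ ≤ ‖fderiv ℝ f x‖ * ‖θ‖ := (fderiv ℝ f x).le_opNorm θ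
    _ = ENNReal.ofReal ‖θ‖ * ∫⁻ x : E, ENNReal.ofReal ‖fderiv ℝ f x‖ := by
        simp_rw [mul_comm ‖fderiv ℝ f _‖, ENNReal.ofReal_mul (norm_nonneg θ)]
        exact lintegral_const_mul' _ _ ENNReal.ofReal_ne_top

theorem Lfun_ne_top {f : E → ℝ} (hgrad : Integrable fun x : E => ‖fderiv ℝ f x‖) (θ : E) :
    Lfun f θ ≠ ∞ := by
  refine ne_top_of_le_ne_top ?_ (Lfun_le θ)
  refine ENNReal.mul_ne_top ENNReal.ofReal_ne_top ?_
  have h := lint_abs_ne_top hgrad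
  simpa [abs_of_nonneg (norm_nonneg _)] using h

theorem slope_lim {f : E → ℝ} (hf : ContDiff ℝ 1 f) (θ y : E) :
    Tendsto (fun r : ℝ => ENNReal.ofReal |f (r • θ + y) - f y| / ENNReal.ofReal r)
      (𝓝[>] (0:ℝ)) (𝓝 (ENNReal.ofReal |fderiv ℝ f y θ|)) := by
  have hder : HasDerivAt (fun s : ℝ => f (y + s • θ)) (fderiv ℝ f y θ) 0 := by
    have h1 : HasDerivAt (fun s : ℝ => y + s • θ) θ 0 := by
      simpa using ((hasDerivAt_id (0:ℝ)).smul_const θ).const_add y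
    have h2 : HasFDerivAt f (fderiv ℝ f y) (y + (0:ℝ) • θ) := by
      simpa using (hf.differentiable one_ne_zero y).hasFDerivAt
    exact h2.comp_hasDerivAt 0 h1
  have hslope := hasDerivAt_iff_tendsto_slope.mp hder
  have hslope' : Tendsto (fun r : ℝ => (f (y + r • θ) - f y) / r) (𝓝[>] (0:ℝ))
      (𝓝 (fderiv ℝ f y θ)) := by
    have := hslope.mono_left (nhdsWithin_mono _ (fun r (hr : r ∈ Ioi (0:ℝ)) => ne_of_gt hr))
    refine this.congr fun r => ?_
    simp [slope_def_field, div_eq_inv_mul]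
  have habs : Tendsto (fun r : ℝ => |f (y + r • θ) - f y| / r) (𝓝[>] (0:ℝ))
      (𝓝 |fderiv ℝ f y θ|) := by
    have h := hslope'.abs
    refine Tendsto.congr' ?_ h
    filter_upwards [self_mem_nhdsWithin] with r (hr : (0:ℝ) < r)
    rw [abs_div, abs_of_pos hr]
  have hof := (ENNReal.continuous_ofReal.tendsto _).comp habs
  refine Tendsto.congr' ?_ hof
  filter_upwards [self_mem_nhdsWithin] with r (hr : (0:ℝ) < r)
  simp only [Function.comp]
  rw [ENNReal.ofReal_div_of_pos hr, add_comm (r • θ) y]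

theorem Gdiv_lim {f : E → ℝ} (hf : ContDiff ℝ 1 f)
    (hgrad : Integrable fun x : E => ‖fderiv ℝ f x‖) (θ : E) :
    Tendsto (fun r : ℝ => Gfun f θ r / ENNReal.ofReal r) (𝓝[>] (0:ℝ)) (𝓝 (Lfun f θ)) := by
  rw [Filter.tendsto_iff_seq_tendsto]
  intro u hu
  have humem : ∀ᶠ n in atTop, u n ∈ Ioi (0:ℝ) :=
    hu (self_mem_nhdsWithin)
  have hmeas : ∀ n : ℕ, Measurable fun y : E =>
      ENNReal.ofReal |f (u n • θ + y) - f y| / ENNReal.ofReal (u n) := by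
    intro n
    have : Continuous fun y : E => |f (u n • θ + y) - f y| :=
      ((hf.continuous.comp (continuous_const.add continuous_id)).sub hf.continuous).abs
    exact this.measurable.ennreal_ofReal.div measurable_const
  refine tendsto_of_le_liminf_of_limsup_le ?_ ?_ (by isBoundedDefault) (by isBoundedDefault)
  · -- liminf ≥ L
    have hF := lintegral_liminf_le (μ := (volume : Measure E)) (u := atTop) hmeas
    have hpt : ∀ y : E, Filter.liminf (fun n =>
        ENNReal.ofReal |f (u n • θ + y) - f y| / ENNReal.ofReal (u n)) atTop
        = ENNReal.ofReal |fderiv ℝ f y θ| := by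
      intro y
      exact ((slope_lim hf θ y).comp hu).liminf_eq
    have hL : Lfun f θ = ∫⁻ y : E, Filter.liminf (fun n =>
        ENNReal.ofReal |f (u n • θ + y) - f y| / ENNReal.ofReal (u n)) atTop := by
      unfold Lfun; exact lintegral_congr fun y => (hpt y).symm
    rw [hL]
    refine le_trans hF (le_of_eq (Filter.liminf_congr ?_))
    filter_upwards [humem] with n (hn : (0:ℝ) < u n)
    rw [Function.comp]
    simp only [div_eq_mul_inv]
    rw [lintegral_mul_const' _ _ (by simp [hn.le, ENNReal.ofReal_eq_zero, not_le, hn])]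
    rfl
  · -- limsup ≤ L
    refine Filter.limsup_le_of_le (by isBoundedDefault) ?_
    filter_upwards [humem] with n (hn : (0:ℝ) < u n)
    rw [Function.comp]
    refine ENNReal.div_le_of_le_mul ?_
    calc Gfun f θ (u n) ≤ ENNReal.ofReal |u n| * Lfun f θ := Gfun_le hf θ (u n)
      _ = Lfun f θ * ENNReal.ofReal (u n) := by rw [abs_of_pos hn, mul_comm]

theorem lint_rpow_Ioc {p : ℝ} (hp : -1 < p) {δ : ℝ} (hδ : 0 < δ) :
    ∫⁻ r in Set.Ioc (0:ℝ) δ, ENNReal.ofReal (r ^ p)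
      = ENNReal.ofReal (δ ^ (p + 1) / (p + 1)) := by
  have hint : IntegrableOn (fun r : ℝ => r ^ p) (Set.Ioc 0 δ) := by
    rw [← intervalIntegrable_iff_integrableOn_Ioc_of_le hδ.le]
    exact intervalIntegral.intervalIntegrable_rpow' hp
  rw [← ofReal_integral_eq_lintegral_ofReal hint]
  · congr 1
    rw [← intervalIntegral.integral_of_le hδ.le,
      integral_rpow (Or.inl hp), Real.zero_rpow (by linarith), sub_zero]
  · filter_upwards [ae_restrict_mem measurableSet_Ioc] with r hr
    exact Real.rpow_nonneg hr.1.le p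

theorem lint_rpow_Ioi {p : ℝ} (hp : p < -1) :
    ∫⁻ r in Set.Ioi (1:ℝ), ENNReal.ofReal (r ^ p) = ENNReal.ofReal (-1 / (p + 1)) := by
  have hint : IntegrableOn (fun r : ℝ => r ^ p) (Set.Ioi 1) :=
    integrableOn_Ioi_rpow_of_lt hp one_pos
  rw [← ofReal_integral_eq_lintegral_ofReal hint]
  · congr 1
    rw [integral_Ioi_rpow_of_lt hp one_pos, Real.one_rpow]
  · filter_upwards [ae_restrict_mem measurableSet_Ioi] with r hr
    exact Real.rpow_nonneg (le_trans zero_le_one hr.le) p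

theorem scalar_upper (g : ℝ → ℝ≥0∞) (L C : ℝ≥0∞) (hL : L ≠ ∞) (hC : C ≠ ∞)
    (hg1 : ∀ r : ℝ, 0 < r → g r ≤ ENNReal.ofReal r * L)
    (hg2 : ∀ r : ℝ, 0 < r → g r ≤ C) :
    ∀ α ∈ Set.Ioo (0:ℝ) 1, (ENNReal.ofReal (1 - α) *
        ∫⁻ r in Set.Ioi (0:ℝ), ENNReal.ofReal (r ^ (-1 - α)) * g r)
      ≤ L + ENNReal.ofReal ((1 - α) / α) * C := by
  set I : ℝ → ℝ≥0∞ := fun α => ENNReal.ofReal (1 - α) *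
      ∫⁻ r in Set.Ioi (0:ℝ), ENNReal.ofReal (r ^ (-1 - α)) * g r
  show ∀ α ∈ Set.Ioo (0:ℝ) 1, I α ≤ _
  · intro α hα
    obtain ⟨hα0, hα1⟩ := hα
    have hsplit : (∫⁻ r in Set.Ioi (0:ℝ), ENNReal.ofReal (r ^ (-1 - α)) * g r)
        = (∫⁻ r in Set.Ioc (0:ℝ) 1, ENNReal.ofReal (r ^ (-1 - α)) * g r)
          + ∫⁻ r in Set.Ioi (1:ℝ), ENNReal.ofReal (r ^ (-1 - α)) * g r := by
      rw [← Set.Ioc_union_Ioi_eq_Ioi zero_le_one]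
      exact lintegral_union measurableSet_Ioi (Set.Ioc_disjoint_Ioi le_rfl)
    have hmain : (∫⁻ r in Set.Ioc (0:ℝ) 1, ENNReal.ofReal (r ^ (-1 - α)) * g r)
        ≤ ENNReal.ofReal (1 / (1 - α)) * L := by
      calc (∫⁻ r in Set.Ioc (0:ℝ) 1, ENNReal.ofReal (r ^ (-1 - α)) * g r)
          ≤ ∫⁻ r in Set.Ioc (0:ℝ) 1, ENNReal.ofReal (r ^ (-α)) * L := by
            refine setLIntegral_mono' measurableSet_Ioc fun r hr => ?_
            calc ENNReal.ofReal (r ^ (-1 - α)) * g r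
                ≤ ENNReal.ofReal (r ^ (-1 - α)) * (ENNReal.ofReal r * L) :=
                  mul_le_mul_right (hg1 r hr.1) _
              _ = ENNReal.ofReal (r ^ (-1 - α) * r) * L := by
                  rw [ENNReal.ofReal_mul (Real.rpow_nonneg hr.1.le _), mul_assoc]
              _ = ENNReal.ofReal (r ^ (-α)) * L := by
                  congr 2
                  rw [show (-1 - α : ℝ) = -α + -1 by ring, Real.rpow_add hr.1,
                    Real.rpow_neg_one, mul_assoc, inv_mul_cancel₀ hr.1.ne', mul_one]
        _ = ENNReal.ofReal (1 / (1 - α)) * L := by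
            rw [lintegral_mul_const' _ _ hL, lint_rpow_Ioc (by linarith) one_pos]
            rw [Real.one_rpow, show (-α + 1 : ℝ) = 1 - α by ring]
    have htail : (∫⁻ r in Set.Ioi (1:ℝ), ENNReal.ofReal (r ^ (-1 - α)) * g r)
        ≤ ENNReal.ofReal (1 / α) * C := by
      calc (∫⁻ r in Set.Ioi (1:ℝ), ENNReal.ofReal (r ^ (-1 - α)) * g r)
          ≤ ∫⁻ r in Set.Ioi (1:ℝ), ENNReal.ofReal (r ^ (-1 - α)) * C := by
            refine setLIntegral_mono' measurableSet_Ioi fun r hr => ?_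
            exact mul_le_mul_right (hg2 r (lt_trans one_pos hr)) _
        _ = ENNReal.ofReal (1 / α) * C := by
            rw [lintegral_mul_const' _ _ hC, lint_rpow_Ioi (by linarith)]
            congr 2
            rw [show (-1 - α + 1 : ℝ) = -α by ring, div_neg, neg_div, neg_neg, one_div]
    calc I α ≤ ENNReal.ofReal (1 - α) *
          (ENNReal.ofReal (1 / (1 - α)) * L + ENNReal.ofReal (1 / α) * C) := by
          exact mul_le_mul_right (hsplit ▸ add_le_add hmain htail) _
      _ = ENNReal.ofReal ((1 - α) * (1 / (1 - α))) * L
          + ENNReal.ofReal ((1 - α) * (1 / α)) * C := by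
          rw [mul_add, ← mul_assoc, ← mul_assoc,
            ← ENNReal.ofReal_mul (by linarith), ← ENNReal.ofReal_mul (by linarith)]
      _ = L + ENNReal.ofReal ((1 - α) / α) * C := by
          rw [mul_one_div, div_self (by linarith : (1 - α : ℝ) ≠ 0), mul_one_div]
          simp

theorem scalar_lim (g : ℝ → ℝ≥0∞) (L C : ℝ≥0∞) (hL : L ≠ ∞) (hC : C ≠ ∞)
    (hg1 : ∀ r : ℝ, 0 < r → g r ≤ ENNReal.ofReal r * L)
    (hg2 : ∀ r : ℝ, 0 < r → g r ≤ C)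
    (hg3 : Tendsto (fun r => g r / ENNReal.ofReal r) (𝓝[>] (0:ℝ)) (𝓝 L)) :
    Tendsto (fun α : ℝ => ENNReal.ofReal (1 - α) *
        ∫⁻ r in Set.Ioi (0:ℝ), ENNReal.ofReal (r ^ (-1 - α)) * g r)
      (𝓝[Set.Ioo (0:ℝ) 1] 1) (𝓝 L) := by
  set l : Filter ℝ := 𝓝[Set.Ioo (0:ℝ) 1] 1
  set I : ℝ → ℝ≥0∞ := fun α => ENNReal.ofReal (1 - α) *
      ∫⁻ r in Set.Ioi (0:ℝ), ENNReal.ofReal (r ^ (-1 - α)) * g r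
  have hupper : ∀ α ∈ Set.Ioo (0:ℝ) 1, I α ≤ L + ENNReal.ofReal ((1 - α) / α) * C :=
    scalar_upper g L C hL hC hg1 hg2
  have hne : l.NeBot := right_nhdsWithin_Ioo_neBot (by norm_num : (0:ℝ) < 1)
  have hmemIoo : ∀ᶠ α in l, α ∈ Set.Ioo (0:ℝ) 1 := eventually_mem_nhdsWithin
  have hlimsup : Filter.limsup I l ≤ L := by
    have h0 : Tendsto (fun α : ℝ => ENNReal.ofReal ((1 - α) / α)) l (𝓝 0) := by
      have hc : Tendsto (fun α : ℝ => (1 - α) / α) (𝓝 (1:ℝ)) (𝓝 ((1 - 1) / 1)) := by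
        apply Filter.Tendsto.div
        · exact (continuous_const.sub continuous_id).tendsto 1
        · exact continuous_id.tendsto 1
        · norm_num
      have hc' : Tendsto (fun α : ℝ => (1 - α) / α) l (𝓝 0) := by
        simpa using hc.mono_left nhdsWithin_le_nhds
      simpa [Function.comp_def] using (ENNReal.continuous_ofReal.tendsto 0).comp hc'
    have hbd : Tendsto (fun α : ℝ => L + ENNReal.ofReal ((1 - α) / α) * C) l (𝓝 L) := by
      have := (ENNReal.Tendsto.mul_const h0 (Or.inr hC)).const_add L
      simpa using this
    calc Filter.limsup I l
        ≤ Filter.limsup (fun α : ℝ => L + ENNReal.ofReal ((1 - α) / α) * C) l := by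
          refine Filter.limsup_le_limsup ?_ (by isBoundedDefault) (by isBoundedDefault)
          filter_upwards [hmemIoo] with α hα using hupper α hα
      _ = L := hbd.limsup_eq
  have hliminf : L ≤ Filter.liminf I l := by
    rw [le_liminf_iff (by isBoundedDefault) (by isBoundedDefault)]
    intro b hb
    obtain ⟨b', hbb', hb'L⟩ := exists_between hb
    have hb'top : b' ≠ ∞ := hb'L.ne_top
    -- choose δ
    have hev : {r : ℝ | b' < g r / ENNReal.ofReal r} ∈ 𝓝[>] (0:ℝ) :=
      hg3.eventually_const_lt hb'L
    obtain ⟨u, hu0, husub⟩ := mem_nhdsGT_iff_exists_Ioo_subset.mp hev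
    set δ : ℝ := min u 1 with hδdef
    have hδ0 : 0 < δ := lt_min hu0 one_pos
    have hδ1 : δ ≤ 1 := min_le_right _ _
    have hδs : ∀ r ∈ Set.Ioo (0:ℝ) δ, b' * ENNReal.ofReal r ≤ g r := by
      intro r hr
      have hrs := husub ⟨hr.1, lt_of_lt_of_le hr.2 (min_le_left _ _)⟩
      have : b' ≤ g r / ENNReal.ofReal r := le_of_lt hrs
      rwa [ENNReal.le_div_iff_mul_le
        (Or.inl (by simp [ENNReal.ofReal_eq_zero, not_le, hr.1])) (Or.inl ENNReal.ofReal_ne_top)]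
        at this
    -- lower bound for I
    have hlow : ∀ α ∈ Set.Ioo (0:ℝ) 1, ENNReal.ofReal (δ ^ (1 - α)) * b' ≤ I α := by
      intro α hα
      obtain ⟨hα0, hα1⟩ := hα
      have step1 : (∫⁻ r in Set.Ioo (0:ℝ) δ, ENNReal.ofReal (r ^ (-α))) * b'
          ≤ ∫⁻ r in Set.Ioo (0:ℝ) δ, ENNReal.ofReal (r ^ (-1 - α)) * g r := by
        rw [← lintegral_mul_const' _ _ hb'top]
        refine setLIntegral_mono' measurableSet_Ioo fun r hr => ?_
        have hid : ENNReal.ofReal (r ^ (-α))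
            = ENNReal.ofReal (r ^ (-1 - α)) * ENNReal.ofReal r := by
          rw [← ENNReal.ofReal_mul (Real.rpow_nonneg hr.1.le _)]
          congr 1
          rw [show (-1 - α : ℝ) = -α + -1 by ring, Real.rpow_add hr.1, Real.rpow_neg_one,
            mul_assoc, inv_mul_cancel₀ hr.1.ne', mul_one]
        calc ENNReal.ofReal (r ^ (-α)) * b'
            = ENNReal.ofReal (r ^ (-1 - α)) * (b' * ENNReal.ofReal r) := by rw [hid]; ring
          _ ≤ ENNReal.ofReal (r ^ (-1 - α)) * g r := mul_le_mul_right (hδs r hr) _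
      have step2 : (∫⁻ r in Set.Ioo (0:ℝ) δ, ENNReal.ofReal (r ^ (-α)))
          = ENNReal.ofReal (δ ^ (1 - α) / (1 - α)) := by
        rw [Measure.restrict_congr_set Ioo_ae_eq_Ioc, lint_rpow_Ioc (by linarith) hδ0,
          show (-α + 1 : ℝ) = 1 - α by ring]
      have step3 : (∫⁻ r in Set.Ioo (0:ℝ) δ, ENNReal.ofReal (r ^ (-1 - α)) * g r)
          ≤ ∫⁻ r in Set.Ioi (0:ℝ), ENNReal.ofReal (r ^ (-1 - α)) * g r :=
        lintegral_mono_set (fun r hr => hr.1)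
      calc ENNReal.ofReal (δ ^ (1 - α)) * b'
          = ENNReal.ofReal (1 - α) * (ENNReal.ofReal (δ ^ (1 - α) / (1 - α)) * b') := by
            rw [← mul_assoc, ← ENNReal.ofReal_mul (by linarith)]
            congr 2
            rw [mul_comm, div_mul_cancel₀ _ (show (1 - α : ℝ) ≠ 0 by linarith)]
        _ ≤ I α := by
            refine mul_le_mul_right ?_ _
            rw [← step2]
            exact le_trans step1 step3
    -- the lower bound tends to b' > b
    have htend2 : Tendsto (fun α : ℝ => ENNReal.ofReal (δ ^ (1 - α)) * b') l (𝓝 b') := by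
      have hδc : Tendsto (fun α : ℝ => δ ^ (1 - α)) (𝓝 (1:ℝ)) (𝓝 (δ ^ (1 - 1 : ℝ))) := by
        have hcont : Continuous fun α : ℝ => δ ^ (1 - α) := by
          simp_rw [Real.rpow_def_of_pos hδ0]
          exact Real.continuous_exp.comp (continuous_const.mul (continuous_const.sub continuous_id))
        exact hcont.tendsto 1
      have hδc' : Tendsto (fun α : ℝ => ENNReal.ofReal (δ ^ (1 - α))) l (𝓝 1) := by
        have : Tendsto (fun α : ℝ => δ ^ (1 - α)) l (𝓝 1) := by
          have h11 : δ ^ (1 - 1 : ℝ) = 1 := by norm_num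
          simpa [h11] using hδc.mono_left nhdsWithin_le_nhds
        simpa [Function.comp_def] using (ENNReal.continuous_ofReal.tendsto 1).comp this
      simpa using ENNReal.Tendsto.mul_const hδc' (Or.inl one_ne_zero)
    have hev2 : ∀ᶠ α in l, b < ENNReal.ofReal (δ ^ (1 - α)) * b' :=
      htend2.eventually_const_lt hbb'
    filter_upwards [hmemIoo, hev2] with α hα hα2
    exact lt_of_lt_of_le hα2 (hlow α hα)
  exact tendsto_of_le_liminf_of_limsup_le hliminf hlimsup
    (by isBoundedDefault) (by isBoundedDefault)


theorem rpow_density_meas (α : ℝ) :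
    Measurable fun r : ℝ => ENNReal.ofReal (r ^ (-1 - α)) :=
  (measurable_id.pow_const _).ennreal_ofReal

theorem stable_lintegral (η : Measure E) (α : ℝ) {g : E → ℝ≥0∞} (hg : Measurable g) :
    ∫⁻ x, g x ∂(stableMeasure η α)
      = ∫⁻ θ, ∫⁻ r in Set.Ioi (0:ℝ), ENNReal.ofReal (r ^ (-1 - α)) * g (r • θ) ∂volume ∂η := by
  set μ0 : Measure ℝ := (volume.restrict (Set.Ioi (0:ℝ))).withDensity
    fun r => ENNReal.ofReal (r ^ (-1 - α)) with hμ0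
  have hkernel : Measurable fun θ : E => Measure.map (fun r : ℝ => r • θ) μ0 := by
    apply Measure.measurable_of_measurable_coe
    intro s hs
    have heq : ∀ θ : E, (Measure.map (fun r : ℝ => r • θ) μ0) s
        = ∫⁻ r, s.indicator 1 (r • θ) ∂μ0 := by
      intro θ
      have hsm : Measurable fun r : ℝ => r • θ := measurable_id.smul_const θ
      rw [Measure.map_apply hsm hs, ← lintegral_indicator_one (hs.preimage hsm)]
      refine lintegral_congr fun r => ?_
      by_cases h : r • θ ∈ s <;> simp [Set.indicator_apply, h]
    simp_rw [heq]
    exact Measurable.lintegral_prod_right'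
      (f := fun p : E × ℝ => s.indicator 1 (p.2 • p.1))
      ((measurable_const.indicator hs).comp (measurable_snd.smul measurable_fst))
  rw [stableMeasure, Measure.lintegral_bind hkernel.aemeasurable hg.aemeasurable]
  refine lintegral_congr fun θ => ?_
  have hsm : Measurable fun r : ℝ => r • θ := measurable_id.smul_const θ
  have hcomp : Measurable fun r : ℝ => g (r • θ) := hg.comp hsm
  rw [lintegral_map hg hsm, hμ0,
    lintegral_withDensity_eq_lintegral_mul _ (rpow_density_meas α) hcomp]
  rfl

theorem Fnu_formula (η : Measure E) [SFinite η] (α : ℝ) {f : E → ℝ} (hf : ContDiff ℝ 1 f) :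
    Fnu (stableMeasure η α) f
      = (1 / 2 : ℝ≥0∞) * ∫⁻ θ, ∫⁻ r in Set.Ioi (0:ℝ),
          ENNReal.ofReal (r ^ (-1 - α)) * Gfun f θ r ∂volume ∂η := by
  have hfc := hf.continuous
  unfold Fnu
  congr 1
  have hg : ∀ y : E, Measurable fun x : E => ENNReal.ofReal |f (x + y) - f y| := by
    intro y
    exact ((hfc.comp (continuous_id.add continuous_const)).sub continuous_const).abs.measurable.ennreal_ofReal
  calc ∫⁻ y : E, ∫⁻ x, ENNReal.ofReal |f (x + y) - f y| ∂(stableMeasure η α)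
      = ∫⁻ y : E, ∫⁻ θ, ∫⁻ r in Set.Ioi (0:ℝ),
          ENNReal.ofReal (r ^ (-1 - α)) * ENNReal.ofReal |f (r • θ + y) - f y| ∂volume ∂η :=
        lintegral_congr fun y => stable_lintegral η α (hg y)
    _ = ∫⁻ θ, ∫⁻ y : E, ∫⁻ r in Set.Ioi (0:ℝ),
          ENNReal.ofReal (r ^ (-1 - α)) * ENNReal.ofReal |f (r • θ + y) - f y|
            ∂volume ∂volume ∂η := by
        rw [lintegral_lintegral_swap]
        apply Measurable.aemeasurable
        apply Measurable.lintegral_prod_right'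
          (f := fun (p : (E × E) × ℝ) => ENNReal.ofReal (p.2 ^ (-1 - α))
            * ENNReal.ofReal |f (p.2 • p.1.2 + p.1.1) - f p.1.1|)
        refine Measurable.mul ((rpow_density_meas α).comp measurable_snd) ?_
        have hc : Continuous fun p : (E × E) × ℝ => |f (p.2 • p.1.2 + p.1.1) - f p.1.1| := by
          have h1 : Continuous fun p : (E × E) × ℝ => f (p.2 • p.1.2 + p.1.1) :=
            hfc.comp ((continuous_snd.smul continuous_fst.snd).add continuous_fst.fst)
          exact (h1.sub (hfc.comp continuous_fst.fst)).abs
        exact hc.measurable.ennreal_ofReal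
    _ = ∫⁻ θ, ∫⁻ r in Set.Ioi (0:ℝ),
          ENNReal.ofReal (r ^ (-1 - α)) * Gfun f θ r ∂volume ∂η := by
        refine lintegral_congr fun θ => ?_
        rw [lintegral_lintegral_swap]
        · refine lintegral_congr fun r => ?_
          exact lintegral_const_mul' _ _ ENNReal.ofReal_ne_top
        · apply Measurable.aemeasurable
          refine Measurable.mul ((rpow_density_meas α).comp measurable_snd) ?_
          have hc : Continuous fun p : E × ℝ => |f (p.2 • θ + p.1) - f p.1| := by
            have h1 : Continuous fun p : E × ℝ => f (p.2 • θ + p.1) :=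
              hfc.comp ((continuous_snd.smul continuous_const).add continuous_fst)
            exact (h1.sub (hfc.comp continuous_fst)).abs
          exact hc.measurable.ennreal_ofReal

end

/-- Asymptotics of stable functionals as `α ↑ 1`: if `η` is a probability measure on
the unit sphere `S^{d−1}` (realized as a measure on `ℝ^d` carried by the sphere), then
for every `C¹` function `f ∈ L¹(ℝ^d)` with `∇f ∈ L¹`,
`(1−α) F_{ν_α}(f) → (1/2) ∫_{S^{d−1}} ∫_{ℝ^d} |∇f(x)·θ| dx η(dθ)` as `α ↑ 1`. -/
theorem statement8 {d : ℕ} (hd : 1 ≤ d)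
    (η : Measure (EuclideanSpace ℝ (Fin d))) (hη : IsProbabilityMeasure η)
    (hηsph : η (Metric.sphere (0 : EuclideanSpace ℝ (Fin d)) 1)ᶜ = 0)
    (f : EuclideanSpace ℝ (Fin d) → ℝ) (hf : ContDiff ℝ 1 f)
    (hfL1 : Integrable f) (hgrad : Integrable fun x => ‖fderiv ℝ f x‖) :
    Tendsto (fun α : ℝ => ENNReal.ofReal (1 - α) * Fnu (stableMeasure η α) f)
      (𝓝[Set.Ioo (0 : ℝ) 1] 1)
      (𝓝 ((1 / 2 : ℝ≥0∞) *
        ∫⁻ θ, (∫⁻ x, ENNReal.ofReal |fderiv ℝ f x θ|) ∂η)) := by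
  have hfc := hf.continuous
  set Cf : ℝ≥0∞ := ∫⁻ x : EuclideanSpace ℝ (Fin d), ENNReal.ofReal |f x| with hCfdef
  have hCf_ne : Cf ≠ ∞ := lint_abs_ne_top hfL1
  have h2Cf : (2 : ℝ≥0∞) * Cf ≠ ∞ := ENNReal.mul_ne_top (by norm_num) hCf_ne
  have hLg_ne : (∫⁻ x : EuclideanSpace ℝ (Fin d), ENNReal.ofReal ‖fderiv ℝ f x‖) ≠ ∞ := by
    simpa [abs_of_nonneg (norm_nonneg _)] using lint_abs_ne_top hgrad
  have hg1 : ∀ θ : EuclideanSpace ℝ (Fin d), ∀ r : ℝ, 0 < r → Gfun f θ r ≤ ENNReal.ofReal r * Lfun f θ := by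
    intro θ r hr
    simpa [abs_of_pos hr] using Gfun_le hf θ r
  have hg2 : ∀ θ : EuclideanSpace ℝ (Fin d), ∀ r : ℝ, 0 < r → Gfun f θ r ≤ 2 * Cf :=
    fun θ r _ => Gfun_le_const hfc θ r
  have hrw : ∀ α : ℝ, ENNReal.ofReal (1 - α) * Fnu (stableMeasure η α) f
      = (1 / 2 : ℝ≥0∞) * ∫⁻ θ, (ENNReal.ofReal (1 - α) *
          ∫⁻ r in Set.Ioi (0:ℝ), ENNReal.ofReal (r ^ (-1 - α)) * Gfun f θ r ∂volume) ∂η := by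
    intro α
    rw [Fnu_formula η α hf, lintegral_const_mul' _ _ ENNReal.ofReal_ne_top]
    ring
  simp only [hrw]
  show Tendsto _ _ (𝓝 ((1 / 2 : ℝ≥0∞) * ∫⁻ θ, Lfun f θ ∂η))
  refine ENNReal.Tendsto.const_mul ?_ (Or.inr (by norm_num))
  have hGmeas := Gfun_meas (d := d) hfc
  have hLmeas : Measurable (Lfun f) := by
    apply Measurable.lintegral_prod_right'
      (f := fun p : EuclideanSpace ℝ (Fin d) × EuclideanSpace ℝ (Fin d) => ENNReal.ofReal |fderiv ℝ f p.2 p.1|)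
    have hc : Continuous fun p : EuclideanSpace ℝ (Fin d) × EuclideanSpace ℝ (Fin d) => |fderiv ℝ f p.2 p.1| :=
      (((hf.continuous_fderiv one_ne_zero).comp continuous_snd).clm_apply continuous_fst).abs
    exact hc.measurable.ennreal_ofReal
  apply tendsto_lintegral_filter_of_dominated_convergence (fun θ => Lfun f θ + 2 * Cf)
  · refine Filter.Eventually.of_forall fun α => ?_
    apply Measurable.const_mul
    apply Measurable.lintegral_prod_right'
      (f := fun p : EuclideanSpace ℝ (Fin d) × ℝ => ENNReal.ofReal (p.2 ^ (-1 - α)) * Gfun f p.1 p.2)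
    exact ((rpow_density_meas α).comp measurable_snd).mul hGmeas
  · have hev : ∀ᶠ α in 𝓝[Set.Ioo (0:ℝ) 1] 1, α ∈ Set.Ioo (0:ℝ) 1 ∧ 1/2 ≤ α := by
      filter_upwards [eventually_mem_nhdsWithin,
        eventually_nhdsWithin_of_eventually_nhds
          (eventually_ge_nhds (by norm_num : (1/2:ℝ) < 1))] with α h1 h2
      exact ⟨h1, h2⟩
    filter_upwards [hev] with α hα2
    obtain ⟨hα, hhalf⟩ := hα2
    refine Filter.Eventually.of_forall fun θ => ?_
    calc ENNReal.ofReal (1 - α) *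
          ∫⁻ r in Set.Ioi (0:ℝ), ENNReal.ofReal (r ^ (-1 - α)) * Gfun f θ r ∂volume
        ≤ Lfun f θ + ENNReal.ofReal ((1 - α) / α) * (2 * Cf) :=
          scalar_upper (Gfun f θ) (Lfun f θ) (2 * Cf) (Lfun_ne_top hgrad θ) h2Cf
            (hg1 θ) (hg2 θ) α hα
      _ ≤ Lfun f θ + 1 * (2 * Cf) := by
          refine add_le_add_right (mul_le_mul_left (?_ : ENNReal.ofReal ((1 - α) / α) ≤ 1) _) _
          refine ENNReal.ofReal_le_one.mpr ?_
          rw [div_le_one hα.1]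
          linarith
      _ = Lfun f θ + 2 * Cf := by rw [one_mul]
  · rw [lintegral_add_left hLmeas, lintegral_const, measure_univ, mul_one]
    refine ENNReal.add_ne_top.mpr ⟨?_, h2Cf⟩
    have hsph : ∀ᵐ θ ∂η, θ ∈ Metric.sphere (0:EuclideanSpace ℝ (Fin d)) 1 := mem_ae_iff.mpr hηsph
    have hae : ∀ᵐ θ ∂η, Lfun f θ ≤ ∫⁻ x : EuclideanSpace ℝ (Fin d), ENNReal.ofReal ‖fderiv ℝ f x‖ := by
      filter_upwards [hsph] with θ hθ
      have h := Lfun_le (f := f) θ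
      rwa [mem_sphere_zero_iff_norm.mp hθ, ENNReal.ofReal_one, one_mul] at h
    refine ne_top_of_le_ne_top hLg_ne ?_
    refine (lintegral_mono_ae hae).trans ?_
    rw [lintegral_const, measure_univ, mul_one]
  · refine Filter.Eventually.of_forall fun θ => ?_
    exact scalar_lim (Gfun f θ) (Lfun f θ) (2 * Cf) (Lfun_ne_top hgrad θ) h2Cf
      (hg1 θ) (hg2 θ) (Gdiv_lim hf hgrad θ)
end
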